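/- For each integer k ≥ 2, let π(k) be the PageRank vector of Γ(k) for α = 1 − 1/k. Then π(k)_A → 0 as k → ∞. -/

import Mathlib

/-- Arc relation of the graph `Γ(k)` on vertex indices `0, ..., k+2`, where
vertex `0` is `C1`, vertex `1` is `C2`, vertex `i+1` is `B_i` for `1 ≤ i ≤ k`,
and vertex `k+2` is `A`.  `PRadj k j i` holds iff there is an arc from `j` to `i`. -/
def PRadj (k j i : ℕ) : Prop :=
  (j = 0 ∧ (i = 0 ∨ i = 1)) ∨
  (j = 1 ∧ (i = 0 ∨ i = 1 ∨ i = 2)) ∨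
  (2 ≤ j ∧ j ≤ k + 1 ∧ (i = 0 ∨ i = 1 ∨ i = j + 1)) ∨
  (j = k + 2 ∧ i = k + 2)

instance (k j i : ℕ) : Decidable (PRadj k j i) := by unfold PRadj; infer_instance

/-- Out-degree of vertex `j` in `Γ(k)`:  `deg(C1) = 2`, `deg(A) = 1`, all others `3`. -/
def PRdeg (k j : ℕ) : ℕ := if j = 0 then 2 else if j = k + 2 then 1 else 3

/-- The PageRank matrix `R_α` of `Γ(k)`:  entry `(i, j)` is
`α / deg(j) + (1 - α)/(k+3)` if there is an arc from `j` to `i`, and `(1 - α)/(k+3)`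
otherwise. -/
noncomputable def PRmat (k : ℕ) (α : ℝ) : Matrix (Fin (k + 3)) (Fin (k + 3)) ℝ :=
  fun i j =>
    if PRadj k j.1 i.1 then α / (PRdeg k j.1 : ℝ) + (1 - α) / ((k : ℝ) + 3)
    else (1 - α) / ((k : ℝ) + 3)

/-- `π` is a PageRank vector of `Γ(k)` for jumping parameter `α`:  it has nonnegative
entries summing to `1` and satisfies `R_α π = π`. -/
def IsPageRank (k : ℕ) (α : ℝ) (π : Fin (k + 3) → ℝ) : Prop :=
  (∀ v, 0 ≤ π v) ∧ (∑ v, π v = 1) ∧ (PRmat k α).mulVec π = π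


lemma pr_entry (k : ℕ) (α : ℝ) (π : Fin (k + 3) → ℝ) (h : IsPageRank k α π)
    (v : Fin (k + 3)) :
    π v = (∑ j, (if PRadj k j.1 v.1 then α / (PRdeg k j.1 : ℝ) else 0) * π j)
      + (1 - α) / ((k : ℝ) + 3) := by
  obtain ⟨h0, h1, h2⟩ := h
  have hv := congrFun h2 v
  have : (PRmat k α).mulVec π v
      = (∑ j, (if PRadj k j.1 v.1 then α / (PRdeg k j.1 : ℝ) else 0) * π j)
        + (1 - α) / ((k : ℝ) + 3) := by
    simp only [Matrix.mulVec, dotProduct, PRmat]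
    rw [show (∑ j, (if PRadj k j.1 v.1 then α / (PRdeg k j.1 : ℝ) + (1-α)/((k:ℝ)+3)
        else (1-α)/((k:ℝ)+3)) * π j)
      = ∑ j, ((if PRadj k j.1 v.1 then α / (PRdeg k j.1 : ℝ) else 0) * π j
        + (1-α)/((k:ℝ)+3) * π j) from Finset.sum_congr rfl (fun j _ => by split <;> ring)]
    rw [Finset.sum_add_distrib, ← Finset.mul_sum, h1, mul_one]
  rw [← hv]; exact this

lemma pr_chain (k : ℕ) (α : ℝ) (π : Fin (k + 3) → ℝ) (h : IsPageRank k α π)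
    (v : ℕ) (hv2 : 2 ≤ v) (hvk : v ≤ k) :
    π ⟨v + 1, by omega⟩ = α / 3 * π ⟨v, by omega⟩ + (1 - α) / ((k : ℝ) + 3) := by
  have := pr_entry k α π h ⟨v + 1, by omega⟩
  rw [this, Finset.sum_eq_single (⟨v, by omega⟩ : Fin (k + 3))]
  · rw [if_pos, show PRdeg k v = 3 by rw [PRdeg, if_neg (by omega), if_neg (by omega)]]
    · norm_num
    · simp only [Fin.val_mk]; unfold PRadj; omega
  · intro j _ hj
    have hjv : j.1 ≠ v := fun hh => hj (Fin.ext hh)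
    have hlt := j.isLt
    rw [if_neg (by simp only [PRadj, Fin.val_mk]; omega), zero_mul]
  · intro hmem; exact absurd (Finset.mem_univ _) hmem

lemma pr_A (k : ℕ) (α : ℝ) (π : Fin (k + 3) → ℝ) (h : IsPageRank k α π) (hk : 2 ≤ k) :
    π ⟨k + 2, Nat.lt_succ_self _⟩ = α / 3 * π ⟨k + 1, by omega⟩ + α * π ⟨k + 2, Nat.lt_succ_self _⟩
      + (1 - α) / ((k : ℝ) + 3) := by
  have heq := pr_entry k α π h ⟨k + 2, by omega⟩
  have hne : (⟨k + 1, by omega⟩ : Fin (k + 3)) ≠ ⟨k + 2, by omega⟩ := by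
    simp [Fin.ext_iff]
  have hs : (∑ j, (if PRadj k j.1 ((⟨k + 2, by omega⟩ : Fin (k + 3)) : ℕ)
        then α / (PRdeg k j.1 : ℝ) else 0) * π j)
      = α / 3 * π ⟨k + 1, by omega⟩ + α * π ⟨k + 2, by omega⟩ := by
    rw [show (Finset.univ : Finset (Fin (k + 3))).sum
          (fun j => (if PRadj k j.1 ((⟨k + 2, by omega⟩ : Fin (k + 3)) : ℕ)
            then α / (PRdeg k j.1 : ℝ) else 0) * π j)
        = ∑ j ∈ ({⟨k + 1, by omega⟩, ⟨k + 2, by omega⟩} : Finset (Fin (k + 3))), _ from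
        (Finset.sum_subset (Finset.subset_univ _) ?_).symm, Finset.sum_pair hne]
    · rw [if_pos (by simp only [Fin.val_mk]; unfold PRadj; omega),
        if_pos (by simp only [Fin.val_mk]; unfold PRadj; omega),
        show PRdeg k (k + 1) = 3 by rw [PRdeg, if_neg (by omega), if_neg (by omega)],
        show PRdeg k (k + 2) = 1 by rw [PRdeg, if_neg (by omega), if_pos rfl]]
      push_cast; ring
    · intro j _ hj
      simp only [Finset.mem_insert, Finset.mem_singleton] at hj
      push_neg at hj
      have h1 : j.1 ≠ k + 1 := fun hh => hj.1 (Fin.ext hh)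
      have h2 : j.1 ≠ k + 2 := fun hh => hj.2 (Fin.ext hh)
      have hlt := j.isLt
      rw [if_neg (by simp only [PRadj, Fin.val_mk]; omega), zero_mul]
  rw [hs] at heq
  exact heq


/-- If `π k` is the PageRank vector of `Γ(k)` for `α = 1 - 1/k` (for each `k ≥ 2`),
then `π(k)_A → 0` as `k → ∞`. -/
theorem pagerank_A_tendsto_zero (π : ∀ k : ℕ, Fin (k + 3) → ℝ)
    (hπ : ∀ k, 2 ≤ k → IsPageRank k (1 - 1 / (k : ℝ)) (π k)) :
    Filter.Tendsto (fun k : ℕ => π k ⟨k + 2, by omega⟩) Filter.atTop (nhds 0) := by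
  have key : ∀ k : ℕ, 2 ≤ k →
      π k ⟨k + 2, by omega⟩ ≤ (2/3 : ℝ)^k + (3/2) / ((k : ℝ) + 3) := by
    intro k hk
    obtain ⟨hpos, hsum, -⟩ := hπ k hk
    set α : ℝ := 1 - 1/(k : ℝ) with hα
    have hk0 : (0:ℝ) < k := by
      have : (2:ℝ) ≤ k := by exact_mod_cast hk
      linarith
    have hinv : 0 < 1/(k:ℝ) := by positivity
    have hinv1 : 1/(k:ℝ) ≤ 1 := by
      rw [div_le_one hk0]; exact_mod_cast Nat.one_le_iff_ne_zero.mpr (by omega)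
    have hα0 : 0 ≤ α := by rw [hα]; linarith
    have hα1 : α ≤ 1 := by rw [hα]; linarith
    have h1α : 1 - α = 1/(k:ℝ) := by rw [hα]; ring
    set t : ℝ := (1 - α)/((k:ℝ) + 3) with hT
    have ht0 : 0 ≤ t := by rw [hT, h1α]; positivity
    have hle1 : ∀ v, π k v ≤ 1 := by
      intro v
      calc π k v ≤ ∑ w, π k w := Finset.single_le_sum (fun i _ => hpos i) (Finset.mem_univ v)
        _ = 1 := hsum
    have hchain : ∀ m, ∀ hm : m ≤ k - 1, π k ⟨2 + m, by omega⟩ ≤ (α/3)^m + (3/2)*t := by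
      intro m
      induction m with
      | zero =>
        intro _
        have := hle1 ⟨2, by omega⟩
        simpa using by linarith
      | succ n ih =>
        intro hm
        have hih := ih (by omega)
        have he := pr_chain k α (π k) (hπ k hk) (2 + n) (by omega) (by omega)
        have hπn := hpos ⟨2 + n, by omega⟩
        have hp : (0:ℝ) ≤ (α/3)^n := by positivity
        have hidx : (⟨2 + (n+1), by omega⟩ : Fin (k+3)) = ⟨2 + n + 1, by omega⟩ := rfl
        rw [hidx, he, pow_succ]
        nlinarith [mul_nonneg hα0 ht0]
    have hBk : π k ⟨k + 1, by omega⟩ ≤ (α/3)^(k-1) + (3/2)*t := by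
      have hc := hchain (k-1) le_rfl
      have hidx : (⟨2 + (k-1), by omega⟩ : Fin (k+3)) = ⟨k+1, by omega⟩ := by
        apply Fin.ext; simp; omega
      rwa [hidx] at hc
    have hA := pr_A k α (π k) (hπ k hk) hk
    have hπA : π k ⟨k + 2, by omega⟩ = (k:ℝ) * (α/3 * π k ⟨k + 1, by omega⟩ + t) := by
      have h2 : (1/(k:ℝ)) * π k ⟨k + 2, by omega⟩ = α/3 * π k ⟨k + 1, by omega⟩ + t := by
        rw [← h1α]; linarith [hA]
      field_simp at h2
      linear_combination h2 / 3
    have hp1 : (α/3)^(k-1) ≤ (1/3:ℝ)^(k-1) := by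
      apply pow_le_pow_left₀ (by linarith) (by linarith)
    have step : α/3 * π k ⟨k + 1, by omega⟩ + t ≤ 1/3 * ((1/3:ℝ)^(k-1) + (3/2)*t) + t := by
      have h1 : α/3 * π k ⟨k + 1, by omega⟩ ≤ 1/3 * ((1/3:ℝ)^(k-1) + (3/2)*t) := by
        apply mul_le_mul (by linarith) (le_trans hBk (by linarith)) (hpos _) (by norm_num)
      linarith
    have hkt : (k:ℝ) * t = 1/((k:ℝ) + 3) := by
      rw [hT, h1α]; field_simp
    have hpow : (1/3:ℝ) * (1/3)^(k-1) = (1/3)^k := by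
      rw [← pow_succ']; congr 1; omega
    have h2k : (k:ℝ) ≤ 2^k := by exact_mod_cast (Nat.lt_two_pow_self (n := k)).le
    have hgeo : (k:ℝ) * (1/3)^k ≤ (2/3)^k := by
      calc (k:ℝ) * (1/3)^k ≤ 2^k * (1/3)^k :=
            mul_le_mul_of_nonneg_right h2k (by positivity)
        _ = (2/3)^k := by rw [← mul_pow]; norm_num
    calc π k ⟨k + 2, by omega⟩ = (k:ℝ) * (α/3 * π k ⟨k + 1, by omega⟩ + t) := hπA
      _ ≤ (k:ℝ) * (1/3 * ((1/3:ℝ)^(k-1) + (3/2)*t) + t) :=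
          mul_le_mul_of_nonneg_left step (le_of_lt hk0)
      _ = (k:ℝ) * ((1/3:ℝ)*(1/3)^(k-1)) + (3/2) * ((k:ℝ)*t) := by ring
      _ = (k:ℝ) * (1/3)^k + (3/2) / ((k:ℝ)+3) := by rw [hpow, hkt]; ring
      _ ≤ (2/3:ℝ)^k + (3/2) / ((k:ℝ)+3) := by linarith [hgeo]
  have hg1 : Filter.Tendsto (fun k : ℕ => (2/3 : ℝ)^k) Filter.atTop (nhds 0) :=
    tendsto_pow_atTop_nhds_zero_of_lt_one (by norm_num) (by norm_num)
  have hg2 : Filter.Tendsto (fun k : ℕ => (3/2 : ℝ) / ((k:ℝ) + 3)) Filter.atTop (nhds 0) := by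
    apply Filter.Tendsto.div_atTop tendsto_const_nhds
    exact Filter.tendsto_atTop_add_const_right _ 3 tendsto_natCast_atTop_atTop
  have hg : Filter.Tendsto (fun k : ℕ => (2/3 : ℝ)^k + (3/2) / ((k:ℝ) + 3))
      Filter.atTop (nhds 0) := by simpa using hg1.add hg2
  apply tendsto_of_tendsto_of_tendsto_of_le_of_le' tendsto_const_nhds hg
  · filter_upwards [Filter.eventually_ge_atTop 2] with k hk
    exact (hπ k hk).1 _
  · filter_upwards [Filter.eventually_ge_atTop 2] with k hk
    exact key k hk
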